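/- Let 𝒳 and 𝒴 be finite alphabets, let W and Ŵ be two DMCs from 𝒳 to 𝒴, and let P_X be a pmf on 𝒳. Then the total variation distance between the n-fold product joint distributions satisfies TV( (Ŵ·P_X)^n, (W·P_X)^n ) ≤ sqrt( 1 − exp( −n·KL(Ŵ·P_X ‖ W·P_X) ) ), where (Ŵ·P_X)^n denotes the n-fold product of the joint pmf (x,y) ↦ P_X(x)·Ŵ(y|x). -/

import Mathlib

/-!
Bretagnolle–Huber bound for the total variation distance between the n-fold products
of two channel joint distributions.
-/

open scoped BigOperators Classical ENNReal

/-- `P` is a probability mass function on the finite type `Ω`. -/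
def IsPMF {Ω : Type*} [Fintype Ω] (P : Ω → ℝ) : Prop :=
  (∀ ω, 0 ≤ P ω) ∧ ∑ ω, P ω = 1

/-- `W` is a discrete memoryless channel from `𝒳` to `𝒴`. -/
def IsDMC {𝒳 𝒴 : Type*} [Fintype 𝒴] (W : 𝒳 → 𝒴 → ℝ) : Prop :=
  ∀ x, IsPMF (W x)

/-- Total variation distance between pmfs on a finite type:
`TV(P,Q) = sup_E |P(E) − Q(E)|` over all events `E`. -/
noncomputable def tvFin {Ω : Type*} [Fintype Ω] (P Q : Ω → ℝ) : ℝ :=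
  ⨆ E : Finset Ω, |∑ ω ∈ E, P ω - ∑ ω ∈ E, Q ω|

/-- Kullback–Leibler divergence (in nats) between pmfs on a finite type, as a real
number (convention `0·ln(0/q) = 0`). -/
noncomputable def klDivFin {Ω : Type*} [Fintype Ω] (P Q : Ω → ℝ) : ℝ :=
  ∑ ω, P ω * Real.log (P ω / Q ω)

/-- Extended Kullback–Leibler divergence: `+∞` when `P` is not absolutely continuous
with respect to `Q`. -/
noncomputable def klDivE {Ω : Type*} [Fintype Ω] (P Q : Ω → ℝ) : ℝ≥0∞ :=
  if ∀ ω, Q ω = 0 → P ω = 0 then ENNReal.ofReal (klDivFin P Q) else ⊤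

section Aux
variable {Ω : Type*} [Fintype Ω]

/-- TV is at most `1 - ∑ min`. -/
lemma tv_le_one_sub_min (P Q : Ω → ℝ) (hP : IsPMF P) (hQ : IsPMF Q) :
    tvFin P Q ≤ 1 - ∑ ω, min (P ω) (Q ω) := by
  apply ciSup_le
  intro E
  rw [abs_sub_le_iff]
  constructor
  · calc ∑ ω ∈ E, P ω - ∑ ω ∈ E, Q ω = ∑ ω ∈ E, (P ω - Q ω) := by
          rw [Finset.sum_sub_distrib]
    _ ≤ ∑ ω ∈ E, (P ω - min (P ω) (Q ω)) :=
        Finset.sum_le_sum fun i _ => sub_le_sub_left (min_le_right _ _) _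
    _ ≤ ∑ ω, (P ω - min (P ω) (Q ω)) :=
        Finset.sum_le_sum_of_subset_of_nonneg (Finset.subset_univ E)
          (fun i _ _ => by simp [min_le_left])
    _ = 1 - ∑ ω, min (P ω) (Q ω) := by rw [Finset.sum_sub_distrib, hP.2]
  · calc ∑ ω ∈ E, Q ω - ∑ ω ∈ E, P ω = ∑ ω ∈ E, (Q ω - P ω) := by
          rw [Finset.sum_sub_distrib]
    _ ≤ ∑ ω ∈ E, (Q ω - min (P ω) (Q ω)) :=
        Finset.sum_le_sum fun i _ => sub_le_sub_left (min_le_left _ _) _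
    _ ≤ ∑ ω, (Q ω - min (P ω) (Q ω)) :=
        Finset.sum_le_sum_of_subset_of_nonneg (Finset.subset_univ E)
          (fun i _ _ => by simp [min_le_right])
    _ = 1 - ∑ ω, min (P ω) (Q ω) := by rw [Finset.sum_sub_distrib, hQ.2]

/-- Cauchy–Schwarz: `(∑ √(PQ))² ≤ (∑ min)(∑ max)`. -/
lemma hellinger_sq_le (P Q : Ω → ℝ) (hP : IsPMF P) (hQ : IsPMF Q) :
    (∑ ω, Real.sqrt (P ω * Q ω)) ^ 2 ≤
      (∑ ω, min (P ω) (Q ω)) * ∑ ω, max (P ω) (Q ω) := by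
  apply Finset.sum_sq_le_sum_mul_sum_of_sq_eq_mul
  · exact fun i _ => le_min (hP.1 i) (hQ.1 i)
  · exact fun i _ => le_max_of_le_left (hP.1 i)
  · intro i _
    rw [Real.sq_sqrt (mul_nonneg (hP.1 i) (hQ.1 i)), min_mul_max]

lemma max_sum_eq_two_sub (P Q : Ω → ℝ) (hP : IsPMF P) (hQ : IsPMF Q) :
    ∑ ω, max (P ω) (Q ω) = 2 - ∑ ω, min (P ω) (Q ω) := by
  have h : ∑ ω, (min (P ω) (Q ω) + max (P ω) (Q ω)) = 2 := by
    simp only [min_add_max]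
    rw [Finset.sum_add_distrib, hP.2, hQ.2]; norm_num
  rw [Finset.sum_add_distrib] at h
  linarith

/-- Jensen/AM-GM: `exp(−KL/2) ≤ ∑ √(PQ)` under absolute continuity. -/
lemma exp_neg_kl_half_le (P Q : Ω → ℝ) (hP : IsPMF P) (hQ : IsPMF Q)
    (hac : ∀ ω, Q ω = 0 → P ω = 0) :
    Real.exp (-(klDivFin P Q) / 2) ≤ ∑ ω, Real.sqrt (P ω * Q ω) := by
  classical
  set s : Finset Ω := Finset.univ.filter fun ω => P ω ≠ 0 with hs
  have hPpos : ∀ ω ∈ s, 0 < P ω := fun ω hω =>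
    lt_of_le_of_ne (hP.1 ω) (Ne.symm (Finset.mem_filter.mp hω).2)
  have hQpos : ∀ ω ∈ s, 0 < Q ω := fun ω hω => by
    rcases lt_or_eq_of_le (hQ.1 ω) with h | h
    · exact h
    · exact absurd (hac ω h.symm) (Finset.mem_filter.mp hω).2
  have hsum1 : ∑ ω ∈ s, P ω = 1 := by
    rw [← hP.2]
    exact Finset.sum_filter_of_ne fun ω _ h => h
  have key := Real.geom_mean_le_arith_mean_weighted s P
      (fun ω => Real.sqrt (Q ω / P ω))
      (fun ω hω => (hPpos ω hω).le) hsum1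
      (fun ω _ => Real.sqrt_nonneg _)
  have hrhs : ∑ ω ∈ s, P ω * Real.sqrt (Q ω / P ω) = ∑ ω ∈ s, Real.sqrt (P ω * Q ω) := by
    apply Finset.sum_congr rfl
    intro ω hω
    rw [show P ω * Q ω = (Q ω / P ω) * (P ω)^2 by field_simp [(hPpos ω hω).ne'],
      Real.sqrt_mul (div_nonneg (hQpos ω hω).le (hPpos ω hω).le),
      Real.sqrt_sq (hPpos ω hω).le]
    ring
  have hlhs : ∏ ω ∈ s, Real.sqrt (Q ω / P ω) ^ (P ω) =
      Real.exp (-(klDivFin P Q) / 2) := by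
    have hterm : ∀ ω ∈ s, Real.sqrt (Q ω / P ω) ^ (P ω)
        = Real.exp (P ω * (Real.log (P ω / Q ω) * (-1/2))) := by
      intro ω hω
      have hq := hQpos ω hω
      have hp := hPpos ω hω
      have hzpos : 0 < Real.sqrt (Q ω / P ω) := Real.sqrt_pos.mpr (div_pos hq hp)
      rw [Real.rpow_def_of_pos hzpos, Real.log_sqrt (div_nonneg hq.le hp.le),
        show Q ω / P ω = (P ω / Q ω)⁻¹ by field_simp, Real.log_inv]
      ring_nf
    rw [Finset.prod_congr rfl hterm, ← Real.exp_sum]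
    congr 1
    have h2 : ∑ ω ∈ s, P ω * (Real.log (P ω / Q ω) * (-1/2))
        = (-1/2) * ∑ ω ∈ s, P ω * Real.log (P ω / Q ω) := by
      rw [Finset.mul_sum]; apply Finset.sum_congr rfl; intro ω _; ring
    have h3 : ∑ ω ∈ s, P ω * Real.log (P ω / Q ω) = klDivFin P Q := by
      rw [klDivFin]
      exact Finset.sum_filter_of_ne fun ω _ h => by
        intro hz; rw [hz] at h; simp at h
    rw [h2, h3]; ring
  calc Real.exp (-(klDivFin P Q) / 2) = ∏ ω ∈ s, Real.sqrt (Q ω / P ω) ^ (P ω) := hlhs.symm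
    _ ≤ ∑ ω ∈ s, P ω * Real.sqrt (Q ω / P ω) := key
    _ = ∑ ω ∈ s, Real.sqrt (P ω * Q ω) := hrhs
    _ ≤ ∑ ω, Real.sqrt (P ω * Q ω) :=
        Finset.sum_le_sum_of_subset_of_nonneg (Finset.subset_univ s)
          (fun i _ _ => Real.sqrt_nonneg _)

end Aux

/-- **TV bound for product distributions.** Let `W`, `Wh` be two DMCs from `𝒳` to `𝒴`
and `PX` an input pmf.  Then
`TV((Wh·PX)^n, (W·PX)^n) ≤ sqrt(1 − exp(−n·KL(Wh·PX ‖ W·PX)))`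
(with the right-hand side equal to `1` when the KL divergence is `∞`). -/
theorem tv_product_le_sqrt {𝒳 𝒴 : Type*} [Fintype 𝒳] [Fintype 𝒴]
    (W Wh : 𝒳 → 𝒴 → ℝ) (hW : IsDMC W) (hWh : IsDMC Wh)
    (PX : 𝒳 → ℝ) (hPX : IsPMF PX) (n : ℕ) :
    tvFin
      (fun p : Fin n → 𝒳 × 𝒴 => ∏ i, PX (p i).1 * Wh (p i).1 (p i).2)
      (fun p : Fin n → 𝒳 × 𝒴 => ∏ i, PX (p i).1 * W (p i).1 (p i).2)
    ≤ if klDivE (fun q : 𝒳 × 𝒴 => PX q.1 * Wh q.1 q.2)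
          (fun q : 𝒳 × 𝒴 => PX q.1 * W q.1 q.2) = ⊤ then 1
      else Real.sqrt (1 - Real.exp (-(n : ℝ) *
        (klDivE (fun q : 𝒳 × 𝒴 => PX q.1 * Wh q.1 q.2)
          (fun q : 𝒳 × 𝒴 => PX q.1 * W q.1 q.2)).toReal)) := by
  classical
  set P : 𝒳 × 𝒴 → ℝ := fun q => PX q.1 * Wh q.1 q.2 with hPdef
  set Q : 𝒳 × 𝒴 → ℝ := fun q => PX q.1 * W q.1 q.2 with hQdef
  have jointPMF : ∀ (V : 𝒳 → 𝒴 → ℝ), IsDMC V →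
      IsPMF (fun q : 𝒳 × 𝒴 => PX q.1 * V q.1 q.2) := by
    intro V hV
    refine ⟨fun q => mul_nonneg (hPX.1 q.1) ((hV q.1).1 q.2), ?_⟩
    rw [Fintype.sum_prod_type]
    simp only [← Finset.mul_sum]
    simp only [fun x => (hV x).2, mul_one]
    exact hPX.2
  have hP : IsPMF P := jointPMF Wh hWh
  have hQ : IsPMF Q := jointPMF W hW
  have prodPMF : ∀ (R : 𝒳 × 𝒴 → ℝ), IsPMF R →
      IsPMF (fun p : Fin n → 𝒳 × 𝒴 => ∏ i, R (p i)) := by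
    intro R hR
    refine ⟨fun p => Finset.prod_nonneg fun i _ => hR.1 (p i), ?_⟩
    rw [← Fintype.sum_pow R n, hR.2, one_pow]
  have hPn : IsPMF (fun p : Fin n → 𝒳 × 𝒴 => ∏ i, P (p i)) := prodPMF P hP
  have hQn : IsPMF (fun p : Fin n → 𝒳 × 𝒴 => ∏ i, Q (p i)) := prodPMF Q hQ
  -- notation for sums of min
  set m : ℝ := ∑ p : Fin n → 𝒳 × 𝒴, min (∏ i, P (p i)) (∏ i, Q (p i)) with hm
  have hm0 : 0 ≤ m := Finset.sum_nonneg fun p _ =>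
    le_min (hPn.1 p) (hQn.1 p)
  have hm1 : m ≤ 1 := by
    rw [hm, ← hPn.2]
    exact Finset.sum_le_sum fun p _ => min_le_left _ _
  have htv : tvFin (fun p : Fin n → 𝒳 × 𝒴 => ∏ i, P (p i))
      (fun p : Fin n → 𝒳 × 𝒴 => ∏ i, Q (p i)) ≤ 1 - m :=
    tv_le_one_sub_min _ _ hPn hQn
  by_cases hac : ∀ ω : 𝒳 × 𝒴, Q ω = 0 → P ω = 0
  case neg =>
    rw [if_pos (by rw [klDivE, if_neg hac])]
    linarith
  case pos =>
    have hne : klDivE P Q ≠ ⊤ := by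
      rw [klDivE, if_pos hac]; exact ENNReal.ofReal_ne_top
    rw [if_neg hne]
    -- Hellinger affinity of the single-letter distributions
    set H : ℝ := ∑ ω : 𝒳 × 𝒴, Real.sqrt (P ω * Q ω) with hH
    have hH0 : 0 ≤ H := Finset.sum_nonneg fun ω _ => Real.sqrt_nonneg _
    have hexpH : Real.exp (-(klDivFin P Q) / 2) ≤ H :=
      exp_neg_kl_half_le P Q hP hQ hac
    -- single-letter Cauchy–Schwarz gives H ≤ 1 hence KL ≥ 0
    have hCS1 : H ^ 2 ≤ (∑ ω : 𝒳 × 𝒴, min (P ω) (Q ω)) * ∑ ω : 𝒳 × 𝒴, max (P ω) (Q ω) :=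
      hellinger_sq_le P Q hP hQ
    have hmin1 : ∑ ω : 𝒳 × 𝒴, min (P ω) (Q ω) ≤ 1 := by
      rw [← hP.2]; exact Finset.sum_le_sum fun ω _ => min_le_left _ _
    have hmin0 : 0 ≤ ∑ ω : 𝒳 × 𝒴, min (P ω) (Q ω) :=
      Finset.sum_nonneg fun ω _ => le_min (hP.1 ω) (hQ.1 ω)
    have hH1 : H ≤ 1 := by
      nlinarith [max_sum_eq_two_sub P Q hP hQ]
    have hKL0 : 0 ≤ klDivFin P Q := by
      by_contra h
      push_neg at h
      have : (1 : ℝ) < Real.exp (-(klDivFin P Q) / 2) := by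
        rw [show (1:ℝ) = Real.exp 0 by simp]
        exact Real.exp_lt_exp.mpr (by linarith)
      linarith
    have htoReal : (klDivE P Q).toReal = klDivFin P Q := by
      rw [klDivE, if_pos hac, ENNReal.toReal_ofReal hKL0]
    rw [htoReal]
    -- product Hellinger affinity
    have hHn : ∑ p : Fin n → 𝒳 × 𝒴, Real.sqrt ((∏ i, P (p i)) * ∏ i, Q (p i)) = H ^ n := by
      rw [hH, Fintype.sum_pow (fun ω => Real.sqrt (P ω * Q ω)) n]
      apply Finset.sum_congr rfl
      intro p _
      rw [← Finset.prod_mul_distrib]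
      induction (Finset.univ : Finset (Fin n)) using Finset.cons_induction with
      | empty => simp
      | cons a t ha ih =>
        rw [Finset.prod_cons, Finset.prod_cons,
          Real.sqrt_mul (mul_nonneg (hP.1 _) (hQ.1 _)), ih]
    -- Cauchy–Schwarz for the product
    have hCSn := hellinger_sq_le _ _ hPn hQn
    rw [hHn, max_sum_eq_two_sub _ _ hPn hQn, ← hm] at hCSn
    -- exp(-n KL) ≤ (H^n)^2
    have hexpn : Real.exp (-(n : ℝ) * klDivFin P Q) ≤ (H ^ n) ^ 2 := by
      have h1 : Real.exp (-(klDivFin P Q)) ≤ H ^ 2 := by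
        have := mul_le_mul hexpH hexpH (Real.exp_nonneg _) hH0
        rwa [← Real.exp_add, show -(klDivFin P Q)/2 + -(klDivFin P Q)/2
          = -(klDivFin P Q) by ring, ← sq] at this
      calc Real.exp (-(n : ℝ) * klDivFin P Q)
          = Real.exp (-(klDivFin P Q)) ^ n := by
            rw [← Real.exp_nat_mul]; ring_nf
        _ ≤ (H ^ 2) ^ n := pow_le_pow_left₀ (Real.exp_nonneg _) h1 n
        _ = (H ^ n) ^ 2 := by ring
    -- conclude
    have hfinal : (1 - m) ^ 2 ≤ 1 - Real.exp (-(n : ℝ) * klDivFin P Q) := by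
      nlinarith
    calc tvFin (fun p : Fin n → 𝒳 × 𝒴 => ∏ i, P (p i)) (fun p : Fin n → 𝒳 × 𝒴 => ∏ i, Q (p i)) ≤ 1 - m := htv
      _ = Real.sqrt ((1 - m) ^ 2) := (Real.sqrt_sq (by linarith)).symm
      _ ≤ Real.sqrt (1 - Real.exp (-(n : ℝ) * klDivFin P Q)) :=
          Real.sqrt_le_sqrt hfinal
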